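/- For every m ≥ 1, set n = 2^(2^(m+1)). Then for all natural numbers c_1, …, c_m and every natural number x, there exists a natural number y with x + 1 ≤ y ≤ x + n such that for every i ∈ {1, …, m}, the number y + c_i does not belong to A. -/
import Mathlib


/-- The set `A`: natural numbers `n` such that for every `k`, some binary digit of `n`
in position `i` with `2^k ≤ i < 2^(k+1)` is zero. -/
def setA : Set ℕ :=
  {n : ℕ | ∀ k : ℕ, ∃ i : ℕ, 2 ^ k ≤ i ∧ i < 2 ^ (k + 1) ∧ ¬ n.testBit i}

/-- If the residue of `N` modulo `2^(2^(k+1))` is at least `2^(2^(k+1)) - 2^(2^k)`,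
then all binary digits of `N` in positions `2^k ≤ i < 2^(k+1)` are ones. -/
lemma fullBlock_not_mem (N k : ℕ)
    (h : 2 ^ 2 ^ (k + 1) - 2 ^ 2 ^ k ≤ N % 2 ^ 2 ^ (k + 1)) : N ∉ setA := by
  intro hA
  obtain ⟨i, hi1, hi2, hi3⟩ := hA k
  apply hi3
  set s := N % 2 ^ 2 ^ (k + 1) with hs
  have hexp : 2 ^ (k + 1) = 2 ^ k + 2 ^ k := by ring
  have hpow : (2 : ℕ) ^ 2 ^ (k + 1) = 2 ^ 2 ^ k * 2 ^ 2 ^ k := by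
    rw [hexp, pow_add]
  have hslt : s < 2 ^ 2 ^ (k + 1) := Nat.mod_lt _ (by positivity)
  have hMpos : 0 < (2 : ℕ) ^ 2 ^ k := by positivity
  have hdiv : s / 2 ^ 2 ^ k = 2 ^ 2 ^ k - 1 := by
    have h1 : 2 ^ 2 ^ k - 1 ≤ s / 2 ^ 2 ^ k := by
      rw [Nat.le_div_iff_mul_le hMpos]
      have : (2 ^ 2 ^ k - 1) * 2 ^ 2 ^ k = 2 ^ 2 ^ k * 2 ^ 2 ^ k - 2 ^ 2 ^ k := by
        rw [Nat.sub_mul, one_mul]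
      omega
    have h2 : s / 2 ^ 2 ^ k < 2 ^ 2 ^ k := by
      rw [Nat.div_lt_iff_lt_mul hMpos]
      omega
    omega
  have hbit : N.testBit i = s.testBit i := by
    rw [hs, Nat.testBit_mod_two_pow, decide_eq_true hi2, Bool.true_and]
  rw [hbit]
  have : s.testBit i = (s / 2 ^ 2 ^ k).testBit (i - 2 ^ k) := by
    rw [← Nat.shiftRight_eq_div_pow, Nat.testBit_shiftRight]
    congr 1
    omega
  rw [this, hdiv, Nat.testBit_two_pow_sub_one]
  simp only [decide_eq_true_eq]
  omega

/-- The key combinatorial lemma. -/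
lemma key_lemma : ∀ (m : ℕ) (c : Fin m → ℕ), ∃ r : ℕ, r < 2 ^ 2 ^ (m + 1) ∧
    ∀ i : Fin m, ∃ k : ℕ, k ≤ m ∧
      2 ^ 2 ^ (k + 1) - 2 ^ 2 ^ k ≤ (r + c i) % 2 ^ 2 ^ (k + 1) := by
  intro m
  induction m with
  | zero =>
    intro c
    exact ⟨0, by positivity, fun i => i.elim0⟩
  | succ m ih =>
    intro c
    obtain ⟨r₀, hr₀, hcond⟩ := ih (fun i => c i.castSucc)
    set M : ℕ := 2 ^ 2 ^ (m + 1) with hM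
    have hMpos : 0 < M := by positivity
    have hM2 : (2 : ℕ) ^ 2 ^ (m + 1 + 1) = M * M := by
      rw [hM, ← pow_add]
      congr 1
      ring
    set q := (r₀ + c (Fin.last m)) / M with hq
    set s0 := (r₀ + c (Fin.last m)) % M with hs0
    have hs0lt : s0 < M := Nat.mod_lt _ hMpos
    set t := M - 1 - q % M with ht
    refine ⟨r₀ + t * M, ?_, ?_⟩
    · have h1 : M ≤ M * M := Nat.le_mul_of_pos_left M hMpos
      have h2 : (M - 1) * M = M * M - M := by rw [Nat.sub_mul, one_mul]
      have h3 : t * M ≤ (M - 1) * M := Nat.mul_le_mul_right M (by omega)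
      rw [hM2]
      omega
    · intro i
      induction i using Fin.lastCases with
      | last =>
        refine ⟨m + 1, le_refl _, ?_⟩
        have hdm : M * q + s0 = r₀ + c (Fin.last m) := Nat.div_add_mod _ M
        have hqm : q % M < M := Nat.mod_lt _ hMpos
        have hsplit : r₀ + t * M + c (Fin.last m) = (q + t) * M + s0 := by
          have e : (q + t) * M + s0 = M * q + s0 + t * M := by ring
          omega
        have e1 : q + t = M * (q / M) + (M - 1) := by
          have := Nat.div_add_mod q M
          omega
        have hqt : (q + t) % M = M - 1 := by
          rw [e1, Nat.mul_add_mod]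
          exact Nat.mod_eq_of_lt (by omega)
        obtain ⟨D, hD⟩ : ∃ D, q + t = M * D + (M - 1) := by
          refine ⟨(q + t) / M, ?_⟩
          have := Nat.div_add_mod (q + t) M
          omega
        have e3 : (q + t) * M + s0 = (M * M) * D + ((M - 1) * M + s0) := by
          rw [hD]; ring
        have h1 : M ≤ M * M := Nat.le_mul_of_pos_left M hMpos
        have h2 : (M - 1) * M = M * M - M := by rw [Nat.sub_mul, one_mul]
        have hmod : ((q + t) * M + s0) % (M * M) = (M - 1) * M + s0 := by
          rw [e3, Nat.mul_add_mod]
          exact Nat.mod_eq_of_lt (by omega)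
        rw [hM2, hsplit, hmod]
        omega
      | cast j =>
        obtain ⟨k, hk, hineq⟩ := hcond j
        refine ⟨k, hk.trans (Nat.le_succ m), ?_⟩
        have hdvd : (2 : ℕ) ^ 2 ^ (k + 1) ∣ M := by
          rw [hM]
          exact pow_dvd_pow 2 (Nat.pow_le_pow_right (by norm_num) (by omega))
        obtain ⟨u, hu⟩ := hdvd
        have : r₀ + t * M + c j.castSucc
            = (r₀ + c j.castSucc) + (t * u) * 2 ^ 2 ^ (k + 1) := by
          rw [hu]; ring
        rw [this, Nat.add_mul_mod_self_right]
        exact hineq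

theorem stmt_0 (m : ℕ) (hm : 1 ≤ m) (c : Fin m → ℕ) (x : ℕ) :
    ∃ y : ℕ, x + 1 ≤ y ∧ y ≤ x + 2 ^ (2 ^ (m + 1)) ∧ ∀ i : Fin m, y + c i ∉ setA := by
  obtain ⟨r, hr, hcond⟩ := key_lemma m c
  set N : ℕ := 2 ^ 2 ^ (m + 1) with hN
  have hNpos : 0 < N := by positivity
  set a := (x + 1) % N with ha
  have halt : a < N := Nat.mod_lt _ hNpos
  refine ⟨x + 1 + (r + N - a) % N, by omega, ?_, ?_⟩
  · have : (r + N - a) % N < N := Nat.mod_lt _ hNpos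
    omega
  · intro i
    obtain ⟨k, hk, hineq⟩ := hcond i
    set y := x + 1 + (r + N - a) % N with hy
    have hymod : y % N = r := by
      have hdiv := Nat.div_add_mod (x + 1) N
      have h1 : y % N = (x + 1 + (r + N - a)) % N := Nat.add_mod_mod _ _ _
      have h2 : x + 1 + (r + N - a) = r + N * ((x + 1) / N) + N := by omega
      rw [h1, h2, Nat.add_mod_right, Nat.add_mul_mod_self_left]
      exact Nat.mod_eq_of_lt hr
    have hmodeq : y + c i ≡ r + c i [MOD N] := by
      have : y ≡ r [MOD N] := by
        unfold Nat.ModEq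
        rw [hymod, Nat.mod_eq_of_lt hr]
      exact this.add_right _
    have hdvd : (2 : ℕ) ^ 2 ^ (k + 1) ∣ N := by
      rw [hN]
      exact pow_dvd_pow 2 (Nat.pow_le_pow_right (by norm_num) (by omega))
    have hmodeq2 : (y + c i) % 2 ^ 2 ^ (k + 1) = (r + c i) % 2 ^ 2 ^ (k + 1) :=
      hmodeq.of_dvd hdvd
    exact fullBlock_not_mem _ k (hmodeq2 ▸ hineq)
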